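/- In the RCD(K,∞) setting, assume the potential F satisfies (F) and (FF). Then there is an increasing function D₄ : [0,∞) → [0,∞), depending only on F and K, such that for every T > 0, every integer n ≥ 1, every σ ∈ [−T,0], every h ∈ (0, T/n] and every Lipschitz a : S → ℝ, the function b(x) = ∫_S exp((1/n)·F(σ,z)) a(z) p_h(x,dz) satisfies Lip(b) ≤ e^{D₄(T)/n}·(Lip(a) + ‖a‖_∞) and ‖b‖_∞ ≤ e^{D₄(T)/n}·‖a‖_∞. -/

import Mathlib

open MeasureTheory Filter Set
open scoped ENNReal NNReal

noncomputable section

/-- The curve of functions `w` has `g` as derivative at `t` within the time set `I`,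
in the sense of `L²(m)`. -/
def HasL2DerivWithinAt {S : Type*} [MeasurableSpace S] (m : Measure S)
    (w : ℝ → S → ℝ) (g : S → ℝ) (I : Set ℝ) (t : ℝ) : Prop :=
  Filter.Tendsto (fun τ => eLpNorm (fun x => (w τ x - w t x) / (τ - t) - g x) 2 m)
    (nhdsWithin t (I \ {t})) (nhds 0)

/-- The curve of functions `w` is continuous on the time set `I` with values in `L²(m)`. -/
def L2ContinuousOn {S : Type*} [MeasurableSpace S] (m : Measure S)
    (w : ℝ → S → ℝ) (I : Set ℝ) : Prop :=
  ∀ t ∈ I, Filter.Tendsto (fun τ => eLpNorm (fun x => w τ x - w t x) 2 m)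
    (nhdsWithin t I) (nhds 0)

/-- `w` belongs to `C¹(I, L²(m))`, with (L²-valued) time derivative `w'`. -/
structure C1L2On {S : Type*} [MeasurableSpace S] (m : Measure S) (I : Set ℝ)
    (w w' : ℝ → S → ℝ) : Prop where
  memL2 : ∀ t ∈ I, MemLp (w t) 2 m
  memL2' : ∀ t ∈ I, MemLp (w' t) 2 m
  hasDeriv : ∀ t ∈ I, HasL2DerivWithinAt m w (w' t) I t
  cont : L2ContinuousOn m w I
  cont' : L2ContinuousOn m w' I

/-- The Dirichlet form setting: a compact metric space `S`, a Borel probability measure `m`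
positive on open sets, a symmetric, closed, Markovian, regular, strongly local bilinear
form `E` with dense domain `domE ⊆ L²(S,m)`, whose carré du champ `Γ` is defined on `domE`,
the associated non-positive self-adjoint operator `Δ` and the backward contraction
semigroup `P` generated by `-(1/2)Δ`. -/
structure DirichletSetting (S : Type*) [MetricSpace S] [CompactSpace S]
    [MeasurableSpace S] [BorelSpace S] (m : Measure S) where
  /-- the domain of the form -/
  domE : Set (S → ℝ)
  /-- the Dirichlet form -/
  E : (S → ℝ) → (S → ℝ) → ℝ
  /-- the carré du champ -/
  Γ : (S → ℝ) → (S → ℝ) → S → ℝ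
  /-- the domain of the generator -/
  domΔ : Set (S → ℝ)
  /-- the generator ("Laplacian") -/
  Δ : (S → ℝ) → S → ℝ
  /-- the semigroup `P h = P_{t, t+h}` generated by `-(1/2)Δ`, backward in time -/
  P : ℝ → (S → ℝ) → S → ℝ
  m_prob : IsProbabilityMeasure m
  m_pos : ∀ U : Set S, IsOpen U → U.Nonempty → 0 < m U
  -- `domE` is a dense subspace of `L²(S,m)`
  domE_memL2 : ∀ f ∈ domE, MemLp f 2 m
  domE_zero : (0 : S → ℝ) ∈ domE
  domE_add : ∀ f ∈ domE, ∀ g ∈ domE, f + g ∈ domE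
  domE_smul : ∀ (c : ℝ), ∀ f ∈ domE, c • f ∈ domE
  domE_dense : ∀ f : S → ℝ, MemLp f 2 m → ∀ ε : ℝ, 0 < ε →
    ∃ g ∈ domE, eLpNorm (f - g) 2 m < ENNReal.ofReal ε
  -- `E` is symmetric bilinear and non-negative
  E_symm : ∀ f g, E f g = E g f
  E_add_left : ∀ f ∈ domE, ∀ g ∈ domE, ∀ h ∈ domE, E (f + g) h = E f h + E g h
  E_smul_left : ∀ (c : ℝ), ∀ f ∈ domE, ∀ g ∈ domE, E (c • f) g = c * E f g
  E_nonneg : ∀ f ∈ domE, 0 ≤ E f f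
  -- `E` is closed: `domE` is complete under the norm `‖·‖_{D(E)}`
  closed : ∀ u : ℕ → S → ℝ, (∀ n, u n ∈ domE) →
    (∀ ε : ℝ, 0 < ε → ∃ N, ∀ p ≥ N, ∀ q ≥ N,
      (eLpNorm (u p - u q) 2 m).toReal ^ 2 + E (u p - u q) (u p - u q) < ε) →
    ∃ f ∈ domE, Filter.Tendsto
      (fun n => (eLpNorm (u n - f) 2 m).toReal ^ 2 + E (u n - f) (u n - f))
      Filter.atTop (nhds 0)
  -- `E` is Markovian
  markovian : ∀ f ∈ domE, ∀ η : ℝ → ℝ, LipschitzWith 1 η → η 0 = 0 →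
    (η ∘ f) ∈ domE ∧ E (η ∘ f) (η ∘ f) ≤ E f f
  -- `E` is regular: it has a core
  regular : ∃ core : Set (S → ℝ), core ⊆ domE ∧ (∀ f ∈ core, Continuous f) ∧
    (∀ f ∈ domE, ∀ ε : ℝ, 0 < ε → ∃ g ∈ core,
      (eLpNorm (f - g) 2 m).toReal ^ 2 + E (f - g) (f - g) < ε) ∧
    (∀ f : S → ℝ, Continuous f → ∀ ε : ℝ, 0 < ε → ∃ g ∈ core, ∀ x, |f x - g x| < ε)
  -- `E` is strongly local
  strongly_local : ∀ f ∈ domE, ∀ g ∈ domE, ∀ c : ℝ, ∀ U : Set S, IsOpen U →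
    tsupport g ⊆ U → (∀ x ∈ U, f x = c) → E f g = 0
  -- the generator `Δ`
  domΔ_subset : domΔ ⊆ domE
  domΔ_dense : ∀ f : S → ℝ, MemLp f 2 m → ∀ ε : ℝ, 0 < ε →
    ∃ g ∈ domΔ, eLpNorm (f - g) 2 m < ENNReal.ofReal ε
  Δ_memL2 : ∀ f ∈ domΔ, MemLp (Δ f) 2 m
  Δ_ibp : ∀ f ∈ domΔ, ∀ g ∈ domE, ∫ x, -(Δ f x) * g x ∂m = E f g
  Δ_symm : ∀ f ∈ domΔ, ∀ g ∈ domΔ, ∫ x, Δ f x * g x ∂m = ∫ x, f x * Δ g x ∂m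
  -- the semigroup `P`
  P_memL2 : ∀ h : ℝ, 0 ≤ h → ∀ f : S → ℝ, MemLp f 2 m → MemLp (P h f) 2 m
  P_zero : ∀ f : S → ℝ, MemLp f 2 m → P 0 f =ᵐ[m] f
  P_semigroup : ∀ h k : ℝ, 0 ≤ h → 0 ≤ k → ∀ f : S → ℝ, MemLp f 2 m →
    P h (P k f) =ᵐ[m] P (h + k) f
  P_contract : ∀ h : ℝ, 0 ≤ h → ∀ f : S → ℝ, MemLp f 2 m →
    eLpNorm (P h f) 2 m ≤ eLpNorm f 2 m
  P_add : ∀ h : ℝ, 0 ≤ h → ∀ f g : S → ℝ, MemLp f 2 m → MemLp g 2 m →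
    P h (f + g) =ᵐ[m] P h f + P h g
  P_smul : ∀ h : ℝ, 0 ≤ h → ∀ (c : ℝ), ∀ f : S → ℝ, MemLp f 2 m →
    P h (c • f) =ᵐ[m] c • P h f
  P_strong_cont : ∀ f : S → ℝ, MemLp f 2 m →
    Filter.Tendsto (fun h => eLpNorm (fun x => P h f x - f x) 2 m)
      (nhdsWithin 0 (Set.Ici 0)) (nhds 0)
  P_generator : ∀ f ∈ domΔ,
    Filter.Tendsto (fun h => eLpNorm (fun x => (P h f x - f x) / h - (1/2) * Δ f x) 2 m)
      (nhdsWithin 0 (Set.Ioi 0)) (nhds 0)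
  P_posPreserving : ∀ h : ℝ, 0 ≤ h → ∀ f : S → ℝ, MemLp f 2 m →
    (∀ᵐ x ∂m, 0 ≤ f x) → ∀ᵐ x ∂m, 0 ≤ P h f x
  -- the carré du champ `Γ`
  Γ_int : ∀ f ∈ domE, ∀ g ∈ domE, Integrable (Γ f g) m
  Γ_symm : ∀ f g, Γ f g = Γ g f
  Γ_add_left : ∀ f ∈ domE, ∀ g ∈ domE, ∀ h ∈ domE, Γ (f + g) h =ᵐ[m] Γ f h + Γ g h
  Γ_smul_left : ∀ (c : ℝ), ∀ f ∈ domE, ∀ g ∈ domE, Γ (c • f) g =ᵐ[m] c • Γ f g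
  Γ_nonneg : ∀ f ∈ domE, ∀ᵐ x ∂m, 0 ≤ Γ f f x
  E_eq_integral : ∀ f ∈ domE, ∀ g ∈ domE, E f g = ∫ x, Γ f g x ∂m
  Γ_cauchySchwarz : ∀ f ∈ domE, ∀ g ∈ domE,
    ∀ᵐ x ∂m, |Γ f g x| ≤ Real.sqrt (Γ f f x) * Real.sqrt (Γ g g x)
  -- chain rule for `Γ`
  Γ_chain : ∀ f ∈ domE, ∀ g ∈ domE, ∀ η : ℝ → ℝ, (∃ L : ℝ≥0, LipschitzWith L η) →
    ContDiff ℝ 1 η →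
    (η ∘ f) ∈ domE ∧ Γ (η ∘ f) g =ᵐ[m] fun x => deriv η (f x) * Γ f g x
  -- Leibniz rule for `Γ`
  Γ_leibniz : ∀ f ∈ domE, ∀ g ∈ domE, ∀ h ∈ domE,
    (∃ C : ℝ, ∀ᵐ x ∂m, |f x| ≤ C) → (∃ C : ℝ, ∀ᵐ x ∂m, |g x| ≤ C) →
    (∃ C : ℝ, ∀ᵐ x ∂m, |h x| ≤ C) →
    (fun x => f x * g x) ∈ domE ∧
      Γ (fun x => f x * g x) h =ᵐ[m] fun x => f x * Γ g h x + g x * Γ f h x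

/-- The Dirichlet form setting together with the Brownian motion associated with the
Dirichlet form: for `m`-a.e. starting point `x` and every starting time `t ≤ 0`, a Borel
probability measure `Pb t x` on paths, concentrated on continuous paths starting at `x`
at time `t`, linked to the semigroup `P` and satisfying the Markov property. -/
structure BrownianSetting (S : Type*) [MetricSpace S] [CompactSpace S]
    [MeasurableSpace S] [BorelSpace S] (m : Measure S)
    extends DirichletSetting S m where
  /-- Wiener measure of the Brownian motion started at `x` at time `t` -/
  Pb : ℝ → S → Measure (ℝ → S)
  Pb_prob : ∀ t : ℝ, t ≤ 0 → ∀ᵐ x ∂m, IsProbabilityMeasure (Pb t x)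
  Pb_start : ∀ t : ℝ, t ≤ 0 → ∀ᵐ x ∂m, Pb t x {γ | γ t = x} = 1
  Pb_cont_paths : ∀ t : ℝ, t ≤ 0 → ∀ᵐ x ∂m,
    Pb t x {γ | ContinuousOn γ (Set.Ici t)} = 1
  Pb_semigroup : ∀ t s : ℝ, t ≤ s → ∀ f : S → ℝ, MemLp f 2 m →
    (fun x => P (s - t) f x) =ᵐ[m] fun x => ∫ γ, f (γ s) ∂(Pb t x)
  Pb_markov : ∀ t s : ℝ, t ≤ s → ∀ Φ : (ℝ → S) → ℝ, Measurable Φ →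
    (∃ C : ℝ, ∀ γ, |Φ γ| ≤ C) → (∀ γ γ' : ℝ → S, (∀ r, s ≤ r → γ r = γ' r) → Φ γ = Φ γ') →
    ∀ᵐ x ∂m, ∫ γ, Φ γ ∂(Pb t x) = ∫ γ, (∫ γ', Φ γ' ∂(Pb s (γ s))) ∂(Pb t x)

/-- The (squared-integral) Wasserstein distance `W₂` between two Borel measures on `S`. -/
def W2 {S : Type*} [MetricSpace S] [MeasurableSpace S] (μ ν : Measure S) : ℝ :=
  Real.sqrt (sInf {c : ℝ | ∃ Sig : Measure (S × S), IsProbabilityMeasure Sig ∧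
    Sig.map Prod.fst = μ ∧ Sig.map Prod.snd = ν ∧ c = ∫ p, dist p.1 p.2 ^ 2 ∂Sig})

/-- The `RCD(K,∞)` setting: `(S,d,m)` is an `RCD(K,∞)` space and `E` is the double of
Cheeger's energy.  We record the consequences used in the paper: every point is the
starting point of a Brownian motion, the transition probabilities
`p_h(x,·) = (e_h)_# P^{(0,x)}`  are `e^{-Kh}`-Lipschitz in `x` for the Wasserstein
distance `W₂`, have a symmetric density with respect to `m`, and
`Γ(a,a) ≤ Lip(a)²` for every Lipschitz `a`. -/
structure RCDSetting (S : Type*) [MetricSpace S] [CompactSpace S]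
    [MeasurableSpace S] [BorelSpace S] (m : Measure S) (K : ℝ)
    extends BrownianSetting S m where
  Pb_prob_all : ∀ (t : ℝ) (x : S), IsProbabilityMeasure (Pb t x)
  Pb_start_all : ∀ (t : ℝ) (x : S), Pb t x {γ | γ t = x} = 1
  trans_lipschitz : ∀ hh : ℝ, 0 < hh → ∀ x y : S,
    W2 (Measure.map (fun γ => γ hh) (Pb 0 x)) (Measure.map (fun γ => γ hh) (Pb 0 y)) ≤
      Real.exp (-K * hh) * dist x y
  trans_density : ∀ hh : ℝ, 0 < hh → ∃ pd : S → S → ℝ≥0∞,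
    (∀ x y, pd x y = pd y x) ∧
    ∀ x, Measure.map (fun γ => γ hh) (Pb 0 x) = m.withDensity (pd x)
  Γ_lipschitz : ∀ (a : S → ℝ) (L : ℝ≥0), LipschitzWith L a →
    a ∈ domE ∧ ∀ᵐ x ∂m, Γ a a x ≤ (L : ℝ) ^ 2

/-- Hypothesis (F): the potential `F` belongs to `C¹((-∞,0], C(S,ℝ))`. -/
def CondF {S : Type*} [TopologicalSpace S] [CompactSpace S] (F : ℝ → C(S, ℝ)) : Prop :=
  ∃ F' : ℝ → C(S, ℝ), (∀ t ∈ Set.Iic (0:ℝ), HasDerivWithinAt F (F' t) (Set.Iic 0) t) ∧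
    ContinuousOn F' (Set.Iic 0)

/-- Hypothesis (FF): `F(t,·)` is Lipschitz, with Lipschitz constant bounded by an
increasing function `D₂(T)` for `t ∈ [-T,0]`. -/
def CondFF {S : Type*} [MetricSpace S] [CompactSpace S] (F : ℝ → C(S, ℝ)) : Prop :=
  ∃ D₂ : ℝ → ℝ, Monotone D₂ ∧ (∀ T : ℝ, 0 ≤ T → 0 ≤ D₂ T) ∧
    ∀ T : ℝ, 0 ≤ T → ∀ t ∈ Set.Icc (-T) (0:ℝ),
      LipschitzWith (Real.toNNReal (D₂ T)) (F t)

/-- `w` is a strong solution, on `(-∞, s]`, of the backward Schrödinger equation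
`∂_t w + (1/2) Δ w + F w = 0` with final condition `w(s,·) = w₀`:
`w ∈ C¹((-∞,s], L²(S,m)) ∩ C((-∞,s], D(Δ))` and the equation holds in `L²(S,m)`
(i.e. `m`-a.e.) for every `t ≤ s`. -/
structure IsStrongSolution {S : Type*} [MetricSpace S] [CompactSpace S]
    [MeasurableSpace S] [BorelSpace S] {m : Measure S} (D : DirichletSetting S m)
    (F : ℝ → C(S, ℝ)) (s : ℝ) (w₀ : S → ℝ) (w : ℝ → S → ℝ) : Prop where
  memDom : ∀ t ≤ s, w t ∈ D.domΔ
  exists_deriv : ∃ w' : ℝ → S → ℝ, C1L2On m (Set.Iic s) w w' ∧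
    ∀ t ≤ s, ∀ᵐ x ∂m, w' t x + (1/2) * D.Δ (w t) x + F t x * w t x = 0
  contΔ : L2ContinuousOn m (fun t => D.Δ (w t)) (Set.Iic s)
  final : w s =ᵐ[m] w₀

/-- The Feynman-Kac formula: `(t,x) ↦ E^{(t,x)}[ exp(∫_t^0 F(τ,γ_τ) dτ) · w₀(γ_0) ]`. -/
def fkSol {S : Type*} [MetricSpace S] [CompactSpace S] [MeasurableSpace S] (Pb : ℝ → S → Measure (ℝ → S))
    (F : ℝ → C(S, ℝ)) (w₀ : S → ℝ) (t : ℝ) (x : S) : ℝ :=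
  ∫ γ, Real.exp (∫ τ in t..(0:ℝ), F τ (γ τ)) * w₀ (γ 0) ∂(Pb t x)

/-- The propagator `f^s(G,t,x) = (1/w(t,x)) E^{(t,x)}[ e^{∫_t^s F(τ,γ_τ)dτ} G(γ_s) w(s,γ_s)]`. -/
def fkProp {S : Type*} [MetricSpace S] [CompactSpace S] [MeasurableSpace S] (Pb : ℝ → S → Measure (ℝ → S))
    (F : ℝ → C(S, ℝ)) (w : ℝ → S → ℝ) (G : S → ℝ) (s t : ℝ) (x : S) : ℝ :=
  (w t x)⁻¹ * ∫ γ, Real.exp (∫ τ in t..s, F τ (γ τ)) * (G (γ s) * w s (γ s)) ∂(Pb t x)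

/-- The map `Φ(w)(t,·) = P_{t,0} w₀ + ∫_t^0 P_{t,s}[F(s,·) w(s,·)] ds`. -/
def PhiMap {S : Type*} [MetricSpace S] [CompactSpace S] [MeasurableSpace S] [BorelSpace S]
    {m : Measure S} (D : DirichletSetting S m) (F : ℝ → C(S, ℝ)) (w₀ : S → ℝ)
    (w : ℝ → S → ℝ) (t : ℝ) (x : S) : ℝ :=
  D.P (-t) w₀ x + ∫ s in t..(0:ℝ), D.P (s - t) (fun y => F s y * w s y) x

/-- Membership in `A_T = {w ∈ C¹([-T,0], L²(S,m)) : w(0,·) = w₀}`, together with a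
choice `w'` of the `L²`-valued time derivative of `w`. -/
structure MemAT {S : Type*} [MetricSpace S] [CompactSpace S] [MeasurableSpace S]
    [BorelSpace S] (m : Measure S) (w₀ : S → ℝ) (T : ℝ) (w w' : ℝ → S → ℝ) : Prop where
  c1 : C1L2On m (Set.Icc (-T) 0) w w'
  init : w 0 =ᵐ[m] w₀

/-- An admissible curve of measures `μ_τ = ρ_τ m` on `[t,0]`: a Borel curve of
probability measures with uniformly bounded densities with respect to `m`. -/
structure Admissible {S : Type*} [MeasurableSpace S] (m : Measure S) (t : ℝ)
    (μ : ℝ → Measure S) (ρ : ℝ → S → ℝ) : Prop where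
  meas : ∀ A : Set S, MeasurableSet A → Measurable fun τ => μ τ A
  prob : ∀ τ ∈ Set.Icc t (0:ℝ), IsProbabilityMeasure (μ τ)
  nonneg : ∀ τ ∈ Set.Icc t (0:ℝ), ∀ᵐ x ∂m, 0 ≤ ρ τ x
  eq_density : ∀ τ ∈ Set.Icc t (0:ℝ), μ τ = m.withDensity fun x => ENNReal.ofReal (ρ τ x)
  bdd : ∃ C : ℝ, ∀ τ ∈ Set.Icc t (0:ℝ), ∀ᵐ x ∂m, ρ τ x ≤ C

/-- `V ∈ W(μ)`: a Borel drift with values in `domE` such that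
`∫_t^0 ∫_S (|V|² + Γ(V,V)) dμ_τ dτ < ∞`. -/
structure MemW {S : Type*} [MetricSpace S] [CompactSpace S] [MeasurableSpace S]
    [BorelSpace S] {m : Measure S} (D : DirichletSetting S m) (t : ℝ)
    (μ : ℝ → Measure S) (V : ℝ → S → ℝ) : Prop where
  mem : ∀ τ ∈ Set.Ioo t (0:ℝ), V τ ∈ D.domE
  int_sq : ∀ τ ∈ Set.Ioo t (0:ℝ), Integrable (fun x => (V τ x) ^ 2) (μ τ)
  int_carre : ∀ τ ∈ Set.Ioo t (0:ℝ), Integrable (fun x => D.Γ (V τ) (V τ) x) (μ τ)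
  fin : IntervalIntegrable
    (fun τ => ∫ x, ((V τ x) ^ 2 + D.Γ (V τ) (V τ) x) ∂(μ τ)) MeasureTheory.volume t 0

/-- `φ` is a test function on `[t,0]`, with (L²-valued) time derivative `φ'`:
`φ ∈ C¹([t,0], L²(S,m)) ∩ L^∞([t,0], D(Δ)) ∩ L^∞([t,0] × S)`. -/
structure IsTest {S : Type*} [MetricSpace S] [CompactSpace S] [MeasurableSpace S]
    [BorelSpace S] {m : Measure S} (D : DirichletSetting S m) (t : ℝ)
    (φ φ' : ℝ → S → ℝ) : Prop where
  c1 : C1L2On m (Set.Icc t 0) φ φ'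
  memDom : ∀ τ ∈ Set.Icc t (0:ℝ), φ τ ∈ D.domΔ
  bddL2 : ∃ C : ℝ≥0∞, ∀ τ ∈ Set.Icc t (0:ℝ), eLpNorm (φ τ) 2 m ≤ C
  bddΔ : ∃ C : ℝ≥0∞, ∀ τ ∈ Set.Icc t (0:ℝ), eLpNorm (D.Δ (φ τ)) 2 m ≤ C
  bddSup : ∃ C : ℝ, ∀ τ ∈ Set.Icc t (0:ℝ), ∀ᵐ x ∂m, |φ τ x| ≤ C

/-- `μ` solves the weak Fokker-Planck equation on `[t,0]` with drift `V`:
`∫_t^0 ∫_S [∂_τ φ + (1/2) Δ φ + Γ(V,φ)] dμ_τ dτ = ∫_S φ_0 dμ_0 − ∫_S φ_t dμ_t`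
for every test function `φ`. -/
def SolvesFP {S : Type*} [MetricSpace S] [CompactSpace S] [MeasurableSpace S]
    [BorelSpace S] {m : Measure S} (D : DirichletSetting S m) (t : ℝ)
    (μ : ℝ → Measure S) (V : ℝ → S → ℝ) : Prop :=
  ∀ φ φ' : ℝ → S → ℝ, IsTest D t φ φ' →
    (∫ τ in t..(0:ℝ), ∫ x, (φ' τ x + (1/2) * D.Δ (φ τ) x + D.Γ (V τ) (φ τ) x) ∂(μ τ)) =
      (∫ x, φ 0 x ∂(μ 0)) - ∫ x, φ t x ∂(μ t)

end


private theorem exp_lip_aux (x y M : ℝ) (hx : x ≤ M) (hy : y ≤ M) :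
    |Real.exp x - Real.exp y| ≤ Real.exp M * |x - y| := by
  have key : ∀ a b : ℝ, a ≤ M → b ≤ M → b ≤ a →
      Real.exp a - Real.exp b ≤ Real.exp M * (a - b) := by
    intro a b ha hb hba
    have h1 : Real.exp a * (1 + (b - a)) ≤ Real.exp a * Real.exp (b - a) :=
      mul_le_mul_of_nonneg_left (by linarith [Real.add_one_le_exp (b - a)]) (Real.exp_pos a).le
    rw [← Real.exp_add, add_sub_cancel] at h1
    have h2 : Real.exp a ≤ Real.exp M := Real.exp_le_exp.2 ha
    nlinarith [Real.exp_pos a]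
  rcases le_total y x with h | h
  · rw [abs_of_nonneg (by linarith [Real.exp_le_exp.2 h]), abs_of_nonneg (by linarith)]
    exact key x y hx hy h
  · rw [abs_of_nonpos (by linarith [Real.exp_le_exp.2 h]), abs_of_nonpos (by linarith)]
    have := key y x hy hx h; linarith

private theorem cont_integrable_aux {S : Type*} [MetricSpace S] [CompactSpace S]
    [MeasurableSpace S] [BorelSpace S] (μ : Measure S) [IsFiniteMeasure μ] {g : S → ℝ}
    (hg : Continuous g) : Integrable g μ :=
  hg.integrable_of_hasCompactSupport
    (IsCompact.of_isClosed_subset isCompact_univ (isClosed_tsupport g) (Set.subset_univ _))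

private theorem intdiff_le_W2 {S : Type*} [MetricSpace S] [CompactSpace S] [MeasurableSpace S]
    [BorelSpace S] (μ ν : Measure S) [IsProbabilityMeasure μ] [IsProbabilityMeasure ν]
    {g : S → ℝ} (hg : Continuous g) {Lg : ℝ} (hLg : 0 ≤ Lg)
    (hlip : ∀ z w, |g z - g w| ≤ Lg * dist z w) :
    |(∫ z, g z ∂μ) - ∫ z, g z ∂ν| ≤ Lg * W2 μ ν := by
  set C : Set ℝ := {c : ℝ | ∃ Sig : Measure (S × S), IsProbabilityMeasure Sig ∧
    Sig.map Prod.fst = μ ∧ Sig.map Prod.snd = ν ∧ c = ∫ p, dist p.1 p.2 ^ 2 ∂Sig} with hC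
  have hW : W2 μ ν = Real.sqrt (sInf C) := rfl
  set Δ : ℝ := (∫ z, g z ∂μ) - ∫ z, g z ∂ν with hΔ
  have hne : C.Nonempty := by
    refine ⟨∫ p, dist p.1 p.2 ^ 2 ∂(μ.prod ν), μ.prod ν, inferInstance, ?_, ?_, rfl⟩
    · simp [Measure.map_fst_prod]
    · simp [Measure.map_snd_prod]
  have h0 : ∀ c ∈ C, 0 ≤ c := by
    rintro c ⟨Sig, hSig, -, -, rfl⟩
    exact integral_nonneg fun p => sq_nonneg _
  have hb : ∀ c ∈ C, |Δ| ≤ Lg * Real.sqrt c := by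
    rintro c ⟨Sig, hSig, hfst, hsnd, rfl⟩
    haveI := hSig
    have hgf : Continuous fun p : S × S => g p.1 := hg.comp continuous_fst
    have hgs : Continuous fun p : S × S => g p.2 := hg.comp continuous_snd
    have h1 : (∫ z, g z ∂μ) = ∫ p, g p.1 ∂Sig := by
      rw [← hfst, integral_map measurable_fst.aemeasurable hg.aestronglyMeasurable]
    have h2 : (∫ z, g z ∂ν) = ∫ p, g p.2 ∂Sig := by
      rw [← hsnd, integral_map measurable_snd.aemeasurable hg.aestronglyMeasurable]
    have hdistc : Continuous fun p : S × S => dist p.1 p.2 := continuous_dist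
    have hint1 := cont_integrable_aux Sig hgf
    have hint2 := cont_integrable_aux Sig hgs
    have hintd := cont_integrable_aux Sig hdistc
    have hsub : Δ = ∫ p, (g p.1 - g p.2) ∂Sig := by
      rw [hΔ, h1, h2, integral_sub hint1 hint2]
    have step1 : |Δ| ≤ ∫ p, Lg * dist p.1 p.2 ∂Sig := by
      rw [hsub, ← Real.norm_eq_abs]
      refine (norm_integral_le_integral_norm _).trans ?_
      exact integral_mono ((hint1.sub hint2).norm) (hintd.const_mul Lg)
        fun p => by simpa [Real.norm_eq_abs] using hlip p.1 p.2
    have step2 : (∫ p, dist p.1 p.2 ∂Sig) ≤ Real.sqrt (∫ p, dist p.1 p.2 ^ 2 ∂Sig) := by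
      have hmem : MemLp (fun p : S × S => dist p.1 p.2) 2 Sig :=
        (memLp_top_of_bound hdistc.aestronglyMeasurable
          (Metric.diam (Set.univ : Set S))
          (Filter.Eventually.of_forall fun p => by
            simpa [Real.norm_eq_abs, abs_of_nonneg dist_nonneg] using
              Metric.dist_le_diam_of_mem isCompact_univ.isBounded (Set.mem_univ _)
                (Set.mem_univ _))).mono_exponent le_top
      have hv := ProbabilityTheory.variance_nonneg (fun p : S × S => dist p.1 p.2) Sig
      rw [ProbabilityTheory.variance_eq_sub hmem] at hv
      have hsq : (∫ p, dist p.1 p.2 ∂Sig)^2 ≤ ∫ p, dist p.1 p.2 ^ 2 ∂Sig := by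
        simpa using hv
      have hI0 : 0 ≤ ∫ p, dist p.1 p.2 ∂Sig := integral_nonneg fun p => dist_nonneg
      nlinarith [Real.sq_sqrt (le_trans (sq_nonneg _) hsq),
        Real.sqrt_nonneg (∫ p, dist p.1 p.2 ^ 2 ∂Sig)]
    calc |Δ| ≤ ∫ p, Lg * dist p.1 p.2 ∂Sig := step1
      _ = Lg * ∫ p, dist p.1 p.2 ∂Sig := integral_const_mul _ _
      _ ≤ Lg * Real.sqrt (∫ p, dist p.1 p.2 ^ 2 ∂Sig) := mul_le_mul_of_nonneg_left step2 hLg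
  rcases eq_or_lt_of_le hLg with hLg0 | hLgpos
  · obtain ⟨c, hc⟩ := hne
    have := hb c hc
    rw [← hLg0] at this ⊢
    simpa using this
  · have hsInf0 : 0 ≤ sInf C := le_csInf hne h0
    have hkey : (|Δ| / Lg) ^ 2 ≤ sInf C := by
      refine le_csInf hne fun c hc => ?_
      have h1 : |Δ| / Lg ≤ Real.sqrt c := by
        rw [div_le_iff₀ hLgpos]
        simpa [mul_comm] using hb c hc
      have := pow_le_pow_left₀ (by positivity) h1 2
      simpa [Real.sq_sqrt (h0 c hc)] using this
    have h2 : |Δ| / Lg ≤ Real.sqrt (sInf C) :=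
      (Real.le_sqrt (by positivity) hsInf0).2 hkey
    rw [hW]
    calc |Δ| = Lg * (|Δ| / Lg) := by field_simp
      _ ≤ Lg * Real.sqrt (sInf C) := mul_le_mul_of_nonneg_left h2 hLg

theorem stmt5 {S : Type*} [MetricSpace S] [CompactSpace S] [MeasurableSpace S] [BorelSpace S]
    {m : MeasureTheory.Measure S} {K : ℝ} (R : RCDSetting S m K)
    (F : ℝ → C(S, ℝ)) (hF : CondF F) (hFF : CondFF F) :
    ∃ D₄ : ℝ → ℝ, Monotone D₄ ∧ (∀ T, 0 ≤ T → 0 ≤ D₄ T) ∧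
      ∀ T : ℝ, 0 < T → ∀ n : ℕ, 1 ≤ n → ∀ σ ∈ Set.Icc (-T) (0:ℝ),
        ∀ h : ℝ, 0 < h → h ≤ T / n →
        ∀ a : S → ℝ, ∀ La : ℝ≥0, LipschitzWith La a → ∀ Ca : ℝ, (∀ z, |a z| ≤ Ca) →
          LipschitzWith (Real.toNNReal (Real.exp (D₄ T / n) * ((La : ℝ) + Ca)))
            (fun x => ∫ z, Real.exp ((1 / (n:ℝ)) * F σ z) * a z
              ∂(MeasureTheory.Measure.map (fun γ => γ h) (R.Pb 0 x))) ∧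
          ∀ x : S, |∫ z, Real.exp ((1 / (n:ℝ)) * F σ z) * a z
              ∂(MeasureTheory.Measure.map (fun γ => γ h) (R.Pb 0 x))| ≤
            Real.exp (D₄ T / n) * Ca := by
  obtain ⟨F', hF'deriv, -⟩ := hF
  obtain ⟨D₂, hD₂mono, hD₂nonneg, hD₂lip⟩ := hFF
  have hFcont : ContinuousOn F (Set.Iic 0) := fun t ht => (hF'deriv t ht).continuousWithinAt
  set nf : ℝ → ℝ := fun T => sSup ((fun t => ‖F t‖) '' Set.Icc (-(max T 0)) 0) with hnf
  have himc : ∀ T : ℝ, IsCompact ((fun t => ‖F t‖) '' Set.Icc (-(max T 0)) 0) := by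
    intro T
    refine IsCompact.image_of_continuousOn isCompact_Icc ?_
    exact continuous_norm.comp_continuousOn (hFcont.mono fun t ht => ht.2)
  have hbdd : ∀ T : ℝ, BddAbove ((fun t => ‖F t‖) '' Set.Icc (-(max T 0)) 0) :=
    fun T => (himc T).bddAbove
  have hzmem : ∀ T : ℝ, (0:ℝ) ∈ Set.Icc (-(max T 0)) (0:ℝ) :=
    fun T => ⟨neg_nonpos.2 (le_max_right T 0), le_refl 0⟩
  have hmemne : ∀ T : ℝ, ((fun t => ‖F t‖) '' Set.Icc (-(max T 0)) 0).Nonempty :=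
    fun T => ⟨‖F 0‖, ⟨0, hzmem T, rfl⟩⟩
  have hnfmono : Monotone nf := fun T1 T2 h12 =>
    csSup_le_csSup (hbdd T2) (hmemne T1)
      (Set.image_mono (Set.Icc_subset_Icc (neg_le_neg (max_le_max h12 le_rfl)) le_rfl))
  have hnfnonneg : ∀ T, 0 ≤ nf T := fun T =>
    le_trans (norm_nonneg (F 0)) (le_csSup (hbdd T) ⟨0, hzmem T, rfl⟩)
  have hnfle : ∀ T : ℝ, 0 < T → ∀ σ ∈ Set.Icc (-T) (0:ℝ), ‖F σ‖ ≤ nf T := by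
    intro T hT σ hσ
    exact le_csSup (hbdd T)
      ⟨σ, ⟨le_trans (neg_le_neg (le_max_left T 0)) hσ.1, hσ.2⟩, rfl⟩
  refine ⟨fun T => nf T + D₂ (max T 0) + |K| * max T 0, ?_, ?_, ?_⟩
  · intro T1 T2 h12
    have h1 := hnfmono h12
    have h2 := hD₂mono (max_le_max h12 (le_refl (0:ℝ)))
    have h3 : |K| * max T1 0 ≤ |K| * max T2 0 :=
      mul_le_mul_of_nonneg_left (max_le_max h12 le_rfl) (abs_nonneg K)
    show nf T1 + D₂ (max T1 0) + |K| * max T1 0 ≤ nf T2 + D₂ (max T2 0) + |K| * max T2 0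
    linarith
  · intro T hT
    have h1 := hnfnonneg T
    have h2 := hD₂nonneg (max T 0) (le_max_right T 0)
    have h3 : 0 ≤ |K| * max T 0 := mul_nonneg (abs_nonneg K) (le_max_right T 0)
    show 0 ≤ nf T + D₂ (max T 0) + |K| * max T 0
    linarith
  · intro T hT n hn σ hσ h hh hhn a La hLa Ca hCa
    have hmax : max T 0 = T := max_eq_left hT.le
    rcases isEmpty_or_nonempty S with hS | hS
    · exact ⟨fun x => isEmptyElim x, fun x => isEmptyElim x⟩
    obtain ⟨z₀⟩ := hS
    have hCa0 : 0 ≤ Ca := le_trans (abs_nonneg _) (hCa z₀)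
    have hLa0 : (0:ℝ) ≤ (La:ℝ) := La.coe_nonneg
    have hn1 : (1:ℝ) ≤ (n:ℝ) := by exact_mod_cast hn
    have hnpos : (0:ℝ) < (n:ℝ) := by linarith
    set β := D₂ T with hβ
    have hβ0 : 0 ≤ β := hD₂nonneg T hT.le
    set MT := nf T / n with hMT
    have hMT0 : 0 ≤ MT := div_nonneg (hnfnonneg T) hnpos.le
    set g : S → ℝ := fun z => Real.exp ((1 / (n:ℝ)) * F σ z) * a z with hgdef
    have hFcontS : Continuous (F σ) := (F σ).continuous
    have hgc : Continuous g :=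
      (Real.continuous_exp.comp (continuous_const.mul hFcontS)).mul hLa.continuous
    have hFσ : ∀ z, |F σ z| ≤ nf T := fun z => by
      have h1 : ‖F σ z‖ ≤ ‖F σ‖ := (F σ).norm_coe_le_norm z
      rw [Real.norm_eq_abs] at h1
      exact h1.trans (hnfle T hT σ hσ)
    have harg : ∀ z, |(1 / (n:ℝ)) * F σ z| ≤ MT := by
      intro z
      rw [abs_mul, abs_of_nonneg (by positivity : (0:ℝ) ≤ 1 / (n:ℝ))]
      calc (1 / (n:ℝ)) * |F σ z| ≤ (1 / (n:ℝ)) * nf T := by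
            exact mul_le_mul_of_nonneg_left (hFσ z) (by positivity)
        _ = MT := by rw [hMT]; ring
    have hexp_le : ∀ z, Real.exp ((1 / (n:ℝ)) * F σ z) ≤ Real.exp MT :=
      fun z => Real.exp_le_exp.2 (le_trans (le_abs_self _) (harg z))
    have hgabs : ∀ z, |g z| ≤ Real.exp MT * Ca := by
      intro z
      rw [hgdef]
      simp only []
      rw [abs_mul, abs_of_pos (Real.exp_pos _)]
      exact mul_le_mul (hexp_le z) (hCa z) (abs_nonneg _) (Real.exp_pos MT).le
    set Lg := Real.exp MT * ((La:ℝ) + Ca * (β / n)) with hLgdef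
    have hLg0 : 0 ≤ Lg := by
      have h1 : (0:ℝ) ≤ (La:ℝ) + Ca * (β / n) := by positivity
      rw [hLgdef]
      positivity
    have hglip : ∀ z w, |g z - g w| ≤ Lg * dist z w := by
      intro z w
      have e1 : g z - g w = Real.exp ((1 / (n:ℝ)) * F σ z) * (a z - a w)
          + a w * (Real.exp ((1 / (n:ℝ)) * F σ z) - Real.exp ((1 / (n:ℝ)) * F σ w)) := by
        rw [hgdef]; ring
      have hA : |Real.exp ((1 / (n:ℝ)) * F σ z) * (a z - a w)|
          ≤ Real.exp MT * ((La:ℝ) * dist z w) := by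
        rw [abs_mul, abs_of_pos (Real.exp_pos _)]
        refine mul_le_mul (hexp_le z) ?_ (abs_nonneg _) (Real.exp_pos MT).le
        have := hLa.dist_le_mul z w
        rwa [Real.dist_eq] at this
      have hB : |a w * (Real.exp ((1 / (n:ℝ)) * F σ z) - Real.exp ((1 / (n:ℝ)) * F σ w))|
          ≤ Ca * (Real.exp MT * ((1 / (n:ℝ)) * (β * dist z w))) := by
        rw [abs_mul]
        refine mul_le_mul (hCa w) ?_ (abs_nonneg _) hCa0
        have hexplip := exp_lip_aux ((1 / (n:ℝ)) * F σ z) ((1 / (n:ℝ)) * F σ w) MT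
          (le_trans (le_abs_self _) (harg z)) (le_trans (le_abs_self _) (harg w))
        have hFlip : |F σ z - F σ w| ≤ β * dist z w := by
          have h1 := (hD₂lip T hT.le σ hσ).dist_le_mul z w
          rw [Real.dist_eq] at h1
          have h2 : ((Real.toNNReal (D₂ T) : ℝ≥0) : ℝ) = β := Real.coe_toNNReal _ hβ0
          rw [h2] at h1
          exact h1
        have hdiff : |(1 / (n:ℝ)) * F σ z - (1 / (n:ℝ)) * F σ w|
            = (1 / (n:ℝ)) * |F σ z - F σ w| := by
          rw [← mul_sub, abs_mul, abs_of_nonneg (by positivity : (0:ℝ) ≤ 1 / (n:ℝ))]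
        refine hexplip.trans ?_
        rw [hdiff]
        refine mul_le_mul_of_nonneg_left ?_ (Real.exp_pos MT).le
        exact mul_le_mul_of_nonneg_left hFlip (by positivity)
      calc |g z - g w| ≤ |Real.exp ((1 / (n:ℝ)) * F σ z) * (a z - a w)|
            + |a w * (Real.exp ((1 / (n:ℝ)) * F σ z) - Real.exp ((1 / (n:ℝ)) * F σ w))| := by
            rw [e1]; exact abs_add_le _ _
        _ ≤ Real.exp MT * ((La:ℝ) * dist z w)
            + Ca * (Real.exp MT * ((1 / (n:ℝ)) * (β * dist z w))) := add_le_add hA hB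
        _ = Lg * dist z w := by rw [hLgdef]; field_simp
    have hev : Measurable fun γ : ℝ → S => γ h := measurable_pi_apply h
    have hprob : ∀ x : S, IsProbabilityMeasure (Measure.map (fun γ => γ h) (R.Pb 0 x)) := by
      intro x
      haveI := R.Pb_prob_all 0 x
      exact Measure.isProbabilityMeasure_map hev.aemeasurable
    have hMTle : Real.exp MT ≤ Real.exp ((nf T + D₂ (max T 0) + |K| * max T 0) / n) := by
      refine Real.exp_le_exp.2 ?_
      rw [hMT, hmax]
      have h3 : 0 ≤ |K| * T := mul_nonneg (abs_nonneg K) hT.le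
      have h2 := hD₂nonneg T hT.le
      gcongr
      linarith
    constructor
    · apply LipschitzWith.of_dist_le_mul
      intro x y
      haveI := hprob x
      haveI := hprob y
      rw [Real.coe_toNNReal _ (by positivity), Real.dist_eq]
      have hbnd := intdiff_le_W2 (Measure.map (fun γ => γ h) (R.Pb 0 x))
        (Measure.map (fun γ => γ h) (R.Pb 0 y)) hgc hLg0 hglip
      have hW2 := R.trans_lipschitz h hh x y
      have hKh : Real.exp (-K * h) ≤ Real.exp (|K| * T / n) := by
        refine Real.exp_le_exp.2 ?_
        have h1 : -K * h ≤ |K| * h := mul_le_mul_of_nonneg_right (neg_le_abs K) hh.le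
        have h2 : |K| * h ≤ |K| * (T / n) := mul_le_mul_of_nonneg_left hhn (abs_nonneg K)
        calc -K * h ≤ |K| * h := h1
          _ ≤ |K| * (T / n) := h2
          _ = |K| * T / n := by ring
      have hstep : (La:ℝ) + Ca * (β / n) ≤ Real.exp (β / n) * ((La:ℝ) + Ca) := by
        have h1 : β / n + 1 ≤ Real.exp (β / n) := Real.add_one_le_exp _
        have h2 : (1:ℝ) ≤ Real.exp (β / n) := Real.one_le_exp (by positivity)
        nlinarith
      have hcomb : Lg * Real.exp (-K * h)
          ≤ Real.exp ((nf T + D₂ (max T 0) + |K| * max T 0) / n) * ((La:ℝ) + Ca) := by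
        have e2 : Real.exp ((nf T + β + |K| * T) / n)
            = Real.exp MT * Real.exp (β / n) * Real.exp (|K| * T / n) := by
          rw [← Real.exp_add, ← Real.exp_add, hMT]
          congr 1
          field_simp
        rw [hmax, ← hβ]
        calc Lg * Real.exp (-K * h)
            ≤ (Real.exp MT * (Real.exp (β / n) * ((La:ℝ) + Ca))) * Real.exp (|K| * T / n) := by
              refine mul_le_mul ?_ hKh (Real.exp_pos _).le ?_
              · exact mul_le_mul_of_nonneg_left hstep (Real.exp_pos MT).le
              · positivity
          _ = Real.exp ((nf T + β + |K| * T) / n) * ((La:ℝ) + Ca) := by rw [e2]; ring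
      calc |(∫ z, g z ∂(Measure.map (fun γ => γ h) (R.Pb 0 x)))
            - ∫ z, g z ∂(Measure.map (fun γ => γ h) (R.Pb 0 y))|
          ≤ Lg * W2 (Measure.map (fun γ => γ h) (R.Pb 0 x))
            (Measure.map (fun γ => γ h) (R.Pb 0 y)) := hbnd
        _ ≤ Lg * (Real.exp (-K * h) * dist x y) := mul_le_mul_of_nonneg_left hW2 hLg0
        _ = (Lg * Real.exp (-K * h)) * dist x y := by ring
        _ ≤ Real.exp ((nf T + D₂ (max T 0) + |K| * max T 0) / n) * ((La:ℝ) + Ca) * dist x y :=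
            mul_le_mul_of_nonneg_right hcomb dist_nonneg
    · intro x
      haveI := hprob x
      have hint : ∀ᵐ z ∂(Measure.map (fun γ => γ h) (R.Pb 0 x)), ‖g z‖ ≤ Real.exp MT * Ca :=
        Filter.Eventually.of_forall fun z => by rw [Real.norm_eq_abs]; exact hgabs z
      have h1 := norm_integral_le_of_norm_le_const hint
      rw [Real.norm_eq_abs] at h1
      simp only [probReal_univ, mul_one] at h1
      refine h1.trans ?_
      exact mul_le_mul_of_nonneg_right hMTle hCa0
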